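/- Let a > 0, h > 0 with a h ≤ 1, ξ = 1 - a h, t_j = j h. For every μ ∈ (0,1] there is C (depending only on μ) such that Σ_{j=1}^{k} ∫_{t_{j-1}}^{t_j} ( e^{-a(t_k - s)} − ξ^{k-j} )² ds ≤ C a^{2μ-1} h^{2μ}. -/

import Mathlib

open Finset

lemma aux_pow_sub_pow (b c : ℝ) (hb : 0 ≤ b) (hbc : b ≤ c) :
    ∀ n : ℕ, c ^ n - b ^ n ≤ n * c ^ (n - 1) * (c - b) := by
  intro n
  induction n with
  | zero => simp
  | succ n ih =>
    have hc : 0 ≤ c := hb.trans hbc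
    have hbn : b ^ n ≤ c ^ n := pow_le_pow_left₀ hb hbc n
    have hcn : 0 ≤ c ^ n := pow_nonneg hc n
    have h3 : c * ((n : ℝ) * c ^ (n-1) * (c-b)) ≤ n * c ^ n * (c - b) := by
      rcases Nat.eq_zero_or_pos n with rfl | hn
      · simp
      · have hcc : c * c ^ (n-1) = c ^ n := by
          rw [← pow_succ']
          congr 1
          omega
        exact le_of_eq (by rw [← hcc]; ring)
    have h1 : c * (c ^ n - b ^ n) ≤ c * ((n:ℝ) * c ^ (n-1) * (c - b)) :=
      mul_le_mul_of_nonneg_left ih hc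
    have h2 : b ^ n * (c - b) ≤ c ^ n * (c - b) :=
      mul_le_mul_of_nonneg_right hbn (by linarith)
    have key : c ^ (n+1) - b ^ (n+1) ≤ (n:ℝ) * c ^ n * (c-b) + c ^ n * (c-b) := by
      have : c ^ (n+1) - b ^ (n+1) = c * (c ^ n - b ^ n) + b ^ n * (c - b) := by ring
      rw [this]
      exact add_le_add (h1.trans h3) h2
    calc c ^ (n+1) - b ^ (n+1) ≤ (n:ℝ) * c ^ n * (c-b) + c ^ n * (c-b) := key
      _ = ((n+1 : ℕ) : ℝ) * c ^ ((n+1) - 1) * (c - b) := by push_cast; ring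

lemma aux_geom_sum (r : ℝ) (h0 : 0 ≤ r) (h1 : r < 1) (k : ℕ) :
    ∑ n ∈ Finset.range k, r ^ n ≤ 1 / (1 - r) := by
  have h1r : 0 < 1 - r := by linarith
  rw [le_div_iff₀ h1r]
  have := geom_sum_mul r k
  have hrk : 0 ≤ r ^ k := pow_nonneg h0 k
  nlinarith [this]

lemma aux_exp_quad (x : ℝ) (hx0 : 0 ≤ x) (hx1 : x ≤ 1) :
    Real.exp (-x) - (1 - x) ≤ x ^ 2 := by
  have h1 : x + 1 ≤ Real.exp x := Real.add_one_le_exp x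
  have h2 : Real.exp (-x) * Real.exp x = 1 := by
    rw [← Real.exp_add]; simp
  have h3 : (1:ℝ) ≤ Real.exp x := by linarith
  have h4 : Real.exp (-x) ≤ 1 := by
    nlinarith [Real.exp_pos (-x)]
  nlinarith [Real.exp_pos (-x)]

set_option maxHeartbeats 1000000 in
lemma aux_interval (a h : ℝ) (ha : 0 < a) (hh : 0 < h) (hah : a*h ≤ 1)
    (k j : ℕ) (hj1 : 1 ≤ j) (hjk : j ≤ k) :
    (∫ s in (((j:ℝ) - 1) * h)..((j:ℝ) * h),
        (Real.exp (-(a * ((k:ℝ) * h - s))) - (1 - a * h) ^ (k - j)) ^ 2)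
      ≤ h * (2 * ((a*h)^2 + (Real.exp 1)^2 * (((k-j : ℕ)):ℝ)^2 * (a*h)^4)
          * Real.exp (-(2 * (((k-j:ℕ)):ℝ) * (a*h)))) := by
  set x := a * h with hxdef
  have hx0 : 0 < x := mul_pos ha hh
  set n : ℕ := k - j with hndef
  have hcast : ((n : ℕ) : ℝ) = (k : ℝ) - (j : ℝ) := by
    rw [hndef, Nat.cast_sub hjk]
  set c : ℝ := Real.exp (-x) with hcdef
  set b : ℝ := 1 - x with hbdef
  have hb0 : 0 ≤ b := by rw [hbdef]; linarith
  have hbc : b ≤ c := by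
    have := Real.add_one_le_exp (-x); rw [hcdef, hbdef]; linarith
  have hc0 : 0 < c := Real.exp_pos _
  have hc1 : c ≤ 1 := by
    rw [hcdef, Real.exp_le_one_iff]; linarith
  have hcb : c - b ≤ x ^ 2 := aux_exp_quad x hx0.le hah
  have hex : Real.exp x ≤ Real.exp 1 := Real.exp_le_exp.mpr hah
  have hex1 : (1:ℝ) ≤ Real.exp x := by
    rw [Real.one_le_exp_iff]; exact hx0.le
  have hcpow : ∀ m : ℕ, Real.exp (-((m:ℝ) * x)) = c ^ m := by
    intro m
    rw [hcdef, ← Real.exp_nat_mul]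
    ring_nf
  have hcn1 : c ^ (n - 1) ≤ Real.exp x * c ^ n := by
    rcases Nat.eq_zero_or_pos n with h0 | hpos
    · simp [h0]; exact hx0.le
    · have : c ^ (n-1) * c = c ^ n := by
        rw [← pow_succ]; congr 1; omega
      have hcx : c * Real.exp x = 1 := by
        rw [hcdef, ← Real.exp_add]; simp
      refine le_of_eq ?_
      calc c ^ (n-1) = c ^ (n-1) * (c * Real.exp x) := by rw [hcx]; ring
        _ = (c ^ (n-1) * c) * Real.exp x := by ring
        _ = Real.exp x * c ^ n := by rw [this]; ring
  -- pointwise bound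
  have hpt : ∀ s ∈ Set.Icc (((j:ℝ) - 1) * h) ((j:ℝ) * h),
      (Real.exp (-(a * ((k:ℝ) * h - s))) - (1 - a*h) ^ (k - j)) ^ 2
        ≤ 2 * (x^2 + (Real.exp 1)^2 * ((n:ℕ):ℝ)^2 * x^4) * Real.exp (-(2 * ((n:ℕ):ℝ) * x)) := by
    intro s hs
    obtain ⟨hs1, hs2⟩ := hs
    set t : ℝ := a * ((k:ℝ) * h - s) with htdef
    have ht1 : (n:ℝ) * x ≤ t := by
      rw [htdef, hxdef, hcast]
      nlinarith
    have ht2 : t ≤ ((n:ℝ) + 1) * x := by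
      rw [htdef, hxdef, hcast]
      nlinarith
    have hub : Real.exp (-t) ≤ c ^ n := by
      rw [← hcpow n]
      exact Real.exp_le_exp.mpr (by linarith)
    have hlb : c ^ n * c ≤ Real.exp (-t) := by
      have : Real.exp (-(((n:ℝ)+1) * x)) ≤ Real.exp (-t) :=
        Real.exp_le_exp.mpr (by linarith)
      calc c ^ n * c = Real.exp (-(((n:ℝ)+1) * x)) := by
            rw [hcdef, ← hcpow n, ← Real.exp_add]; congr 1; ring
        _ ≤ Real.exp (-t) := this
    have hcnpos : (0:ℝ) < c ^ n := pow_pos hc0 n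
    have hbn : b ^ n ≤ c ^ n := pow_le_pow_left₀ hb0 hbc n
    have hpowsub : c ^ n - b ^ n ≤ (n:ℝ) * (Real.exp x * c ^ n) * x ^ 2 := by
      have h1 := aux_pow_sub_pow b c hb0 hbc n
      have h2 : (n:ℝ) * c ^ (n-1) * (c - b) ≤ (n:ℝ) * (Real.exp x * c ^ n) * x ^ 2 := by
        have hn0 : (0:ℝ) ≤ (n:ℝ) := Nat.cast_nonneg n
        have hcb0 : 0 ≤ c - b := by linarith
        have := mul_le_mul hcn1 hcb (by linarith) (by positivity)
        nlinarith
      linarith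
    set D : ℝ := Real.exp (-t) - (1 - a*h) ^ (k - j) with hDdef
    have hDb : (1 - a*h) ^ (k-j) = b ^ n := by rw [hbdef, hxdef, hndef]
    have hDub : D ≤ (n:ℝ) * Real.exp x * c ^ n * x ^ 2 := by
      rw [hDdef, hDb]
      nlinarith
    have hDlb : -(x * c ^ n) ≤ D := by
      rw [hDdef, hDb]
      nlinarith
    have habs : |D| ≤ (x + Real.exp 1 * (n:ℝ) * x^2) * c ^ n := by
      rw [abs_le]
      constructor
      · refine le_trans ?_ hDlb
        have : 0 ≤ Real.exp 1 * (n:ℝ) * x^2 * c ^ n := by positivity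
        nlinarith
      · refine hDub.trans ?_
        have hn0 : (0:ℝ) ≤ (n:ℝ) := Nat.cast_nonneg n
        have h5 : 0 ≤ ((n:ℝ) * Real.exp 1 - (n:ℝ) * Real.exp x) * x^2 * c^n :=
          mul_nonneg (mul_nonneg (sub_nonneg.mpr (mul_le_mul_of_nonneg_left hex hn0))
            (sq_nonneg x)) hcnpos.le
        have h6 : 0 ≤ x * c ^ n := mul_nonneg hx0.le hcnpos.le
        nlinarith [h5, h6]
    have hsq : D ^ 2 ≤ ((x + Real.exp 1 * (n:ℝ) * x^2) * c ^ n) ^ 2 := by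
      rw [← sq_abs]
      exact pow_le_pow_left₀ (abs_nonneg D) habs 2
    have hc2n : (c ^ n) ^ 2 = Real.exp (-(2 * ((n:ℕ):ℝ) * x)) := by
      rw [← pow_mul, ← hcpow (n * 2)]
      push_cast
      ring_nf
    calc D ^ 2 ≤ ((x + Real.exp 1 * (n:ℝ) * x^2) * c ^ n) ^ 2 := hsq
      _ = (x + Real.exp 1 * (n:ℝ) * x^2) ^ 2 * (c ^ n) ^ 2 := by ring
      _ ≤ 2 * (x^2 + (Real.exp 1)^2 * ((n:ℕ):ℝ)^2 * x^4) * (c ^ n)^2 := by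
          have h2 : (x + Real.exp 1 * (n:ℝ) * x^2) ^ 2
              ≤ 2 * (x^2 + (Real.exp 1)^2 * ((n:ℕ):ℝ)^2 * x^4) := by
            nlinarith [sq_nonneg (x - Real.exp 1 * (n:ℝ) * x^2)]
          exact mul_le_mul_of_nonneg_right h2 (sq_nonneg _)
      _ = 2 * (x^2 + (Real.exp 1)^2 * ((n:ℕ):ℝ)^2 * x^4)
            * Real.exp (-(2 * ((n:ℕ):ℝ) * x)) := by rw [hc2n]
  -- integrate
  have hle : ((j:ℝ) - 1) * h ≤ (j:ℝ) * h := by nlinarith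
  have hint : IntervalIntegrable
      (fun s => (Real.exp (-(a * ((k:ℝ) * h - s))) - (1 - a*h) ^ (k - j)) ^ 2)
      MeasureTheory.volume (((j:ℝ) - 1) * h) ((j:ℝ) * h) := by
    apply Continuous.intervalIntegrable
    fun_prop
  calc (∫ s in (((j:ℝ) - 1) * h)..((j:ℝ) * h),
        (Real.exp (-(a * ((k:ℝ) * h - s))) - (1 - a*h) ^ (k - j)) ^ 2)
      ≤ ∫ _ in (((j:ℝ) - 1) * h)..((j:ℝ) * h),
          (2 * (x^2 + (Real.exp 1)^2 * ((n:ℕ):ℝ)^2 * x^4) * Real.exp (-(2 * ((n:ℕ):ℝ) * x))) :=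
        intervalIntegral.integral_mono_on hle hint intervalIntegrable_const hpt
    _ = ((j:ℝ) * h - ((j:ℝ) - 1) * h) •
          (2 * (x^2 + (Real.exp 1)^2 * ((n:ℕ):ℝ)^2 * x^4) * Real.exp (-(2 * ((n:ℕ):ℝ) * x))) :=
        intervalIntegral.integral_const _
    _ = h * (2 * (x^2 + (Real.exp 1)^2 * ((n:ℕ):ℝ)^2 * x^4) * Real.exp (-(2 * ((n:ℕ):ℝ) * x))) := by
        rw [smul_eq_mul]; ring_nf

lemma aux_sum_bound (x : ℝ) (hx0 : 0 < x) (hx1 : x ≤ 1) (k : ℕ) :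
    ∑ n ∈ Finset.range k,
        2 * (x^2 + (Real.exp 1)^2 * (n:ℝ)^2 * x^4) * Real.exp (-(2 * (n:ℝ) * x))
      ≤ 200 * x := by
  set q : ℝ := Real.exp (-x) with hqdef
  have hq0 : 0 < q := Real.exp_pos _
  have hq1 : q < 1 := by
    rw [hqdef, Real.exp_lt_one_iff]; linarith
  have he1 : (1:ℝ) ≤ Real.exp 1 := by
    rw [Real.one_le_exp_iff]; norm_num
  -- termwise bound
  have hterm : ∀ n : ℕ,
      2 * (x^2 + (Real.exp 1)^2 * (n:ℝ)^2 * x^4) * Real.exp (-(2 * (n:ℝ) * x))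
        ≤ (2 + 8 * (Real.exp 1)^2) * x^2 * q ^ n := by
    intro n
    have hqn : Real.exp (-((n:ℝ) * x)) = q ^ n := by
      rw [hqdef, ← Real.exp_nat_mul]; ring_nf
    have hA : Real.exp (-(2 * (n:ℝ) * x)) = q ^ n * q ^ n := by
      rw [← hqn, ← Real.exp_add]; congr 1; ring
    have hqn0 : 0 < q ^ n := pow_pos hq0 n
    have hqn1 : q ^ n ≤ 1 := pow_le_one₀ hq0.le hq1.le
    have hn2 : (n:ℝ)^2 * x^2 * q ^ n ≤ 4 := by
      set u : ℝ := (n:ℝ) * x with hudef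
      have hu0 : 0 ≤ u := by positivity
      have hEq : q ^ n = Real.exp (-u) := by rw [← hqn]
      have hE2 : Real.exp (u/2) * Real.exp (u/2) = Real.exp u := by
        rw [← Real.exp_add]; ring_nf
      have hE1 : 1 + u/2 ≤ Real.exp (u/2) := by
        have := Real.add_one_le_exp (u/2); linarith
      have hinv : Real.exp (-u) * Real.exp u = 1 := by
        rw [← Real.exp_add]; simp
      have hgoal : u^2 * Real.exp (-u) ≤ 4 := by
        nlinarith [Real.exp_pos (-u), Real.exp_pos (u/2), sq_nonneg u]
      calc (n:ℝ)^2 * x^2 * q ^ n = u^2 * Real.exp (-u) := by rw [hEq, hudef]; ring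
        _ ≤ 4 := hgoal
    rw [hA]
    have h1 : 2 * x^2 * (q^n * q^n) ≤ 2 * x^2 * q^n := by
      nlinarith [mul_le_mul_of_nonneg_left hqn1 (by positivity : (0:ℝ) ≤ 2*x^2*q^n)]
    have h2 : 2 * (Real.exp 1)^2 * (n:ℝ)^2 * x^4 * (q^n * q^n)
        ≤ 8 * (Real.exp 1)^2 * x^2 * q^n := by
      have he2 : (0:ℝ) < (Real.exp 1)^2 := by positivity
      have := mul_le_mul_of_nonneg_left hn2 (by positivity : (0:ℝ) ≤ 2 * (Real.exp 1)^2 * x^2 * q^n)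
      nlinarith
    nlinarith [h1, h2]
  have hsum1 : ∑ n ∈ Finset.range k, q ^ n ≤ Real.exp 1 / x := by
    have hgs := aux_geom_sum q hq0.le hq1 k
    have hq' : q * (1 + x) ≤ 1 := by
      have := Real.add_one_le_exp x
      have hqe : q * Real.exp x = 1 := by
        rw [hqdef, ← Real.exp_add]; simp
      nlinarith
    have hqinv : Real.exp (-1) ≤ q := Real.exp_le_exp.mpr (by linarith)
    have hinv1 : Real.exp (-1) * Real.exp 1 = 1 := by rw [← Real.exp_add]; simp
    have h1q : x / Real.exp 1 ≤ 1 - q := by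
      have hE : 0 < Real.exp 1 := Real.exp_pos 1
      rw [div_le_iff₀ hE]
      have h7 : Real.exp (-1) * x ≤ q * x := mul_le_mul_of_nonneg_right hqinv hx0.le
      have h8 : Real.exp (-1) * x ≤ 1 - q := by nlinarith
      have h9 : (Real.exp (-1) * x) * Real.exp 1 ≤ (1 - q) * Real.exp 1 :=
        mul_le_mul_of_nonneg_right h8 hE.le
      have hx' : Real.exp (-1) * x * Real.exp 1 = x := by linear_combination x * hinv1
      linarith
    have h1q0 : 0 < 1 - q := by linarith
    calc ∑ n ∈ Finset.range k, q ^ n ≤ 1 / (1-q) := hgs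
      _ ≤ Real.exp 1 / x := by
        rw [div_le_div_iff₀ h1q0 hx0]
        have hE : 0 < Real.exp 1 := Real.exp_pos 1
        calc 1 * x = (x / Real.exp 1) * Real.exp 1 := by field_simp
          _ ≤ (1 - q) * Real.exp 1 := mul_le_mul_of_nonneg_right h1q hE.le
          _ = Real.exp 1 * (1 - q) := by ring
  calc ∑ n ∈ Finset.range k,
        2 * (x^2 + (Real.exp 1)^2 * (n:ℝ)^2 * x^4) * Real.exp (-(2 * (n:ℝ) * x))
      ≤ ∑ n ∈ Finset.range k, (2 + 8 * (Real.exp 1)^2) * x^2 * q ^ n :=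
        Finset.sum_le_sum (fun n _ => hterm n)
    _ = (2 + 8 * (Real.exp 1)^2) * x^2 * ∑ n ∈ Finset.range k, q ^ n := by
        rw [Finset.mul_sum]
    _ ≤ (2 + 8 * (Real.exp 1)^2) * x^2 * (Real.exp 1 / x) := by
        apply mul_le_mul_of_nonneg_left hsum1 (by positivity)
    _ = (2 + 8 * (Real.exp 1)^2) * Real.exp 1 * x := by field_simp
    _ ≤ 200 * x := by
        have he9 : Real.exp 1 < 2.7182818286 := Real.exp_one_lt_d9
        have he2 : Real.exp 1 ^ 2 < 7.39 := by nlinarith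
        have hconst : (2 + 8 * Real.exp 1 ^ 2) * Real.exp 1 ≤ 200 := by
          nlinarith [he2, he9, he1]
        exact mul_le_mul_of_nonneg_right hconst hx0.le

theorem stmt11 (μ : ℝ) (hμ0 : 0 < μ) (hμ1 : μ ≤ 1) :
    ∃ C : ℝ, 0 < C ∧ ∀ a h : ℝ, 0 < a → 0 < h → a * h ≤ 1 → ∀ k : ℕ,
      (∑ j ∈ Finset.Icc 1 k,
          ∫ s in (((j:ℝ) - 1) * h)..((j:ℝ) * h),
            (Real.exp (-(a * ((k:ℝ) * h - s))) - (1 - a * h) ^ (k - j)) ^ 2)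
        ≤ C * a ^ (2 * μ - 1) * h ^ (2 * μ) := by
  refine ⟨200, by norm_num, ?_⟩
  intro a h ha hh hah k
  set x := a * h with hxdef
  have hx0 : 0 < x := mul_pos ha hh
  set G : ℕ → ℝ := fun n =>
    h * (2 * (x^2 + (Real.exp 1)^2 * (n:ℝ)^2 * x^4) * Real.exp (-(2 * (n:ℝ) * x))) with hGdef
  have h1 : (∑ j ∈ Finset.Icc 1 k,
        ∫ s in (((j:ℝ) - 1) * h)..((j:ℝ) * h),
          (Real.exp (-(a * ((k:ℝ) * h - s))) - (1 - a * h) ^ (k - j)) ^ 2)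
      ≤ ∑ j ∈ Finset.Icc 1 k, G (k - j) := by
    apply Finset.sum_le_sum
    intro j hj
    rw [Finset.mem_Icc] at hj
    exact aux_interval a h ha hh hah k j hj.1 hj.2
  have h2 : ∑ j ∈ Finset.Icc 1 k, G (k - j) = ∑ n ∈ Finset.range k, G n := by
    apply Finset.sum_nbij' (i := fun j => k - j) (j := fun n => k - n)
    · intro j hj; rw [Finset.mem_Icc] at hj; rw [Finset.mem_range]; omega
    · intro n hn; rw [Finset.mem_range] at hn; rw [Finset.mem_Icc]; omega
    · intro j hj; rw [Finset.mem_Icc] at hj; omega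
    · intro n hn; rw [Finset.mem_range] at hn; omega
    · intro j _; rfl
  have h3 : ∑ n ∈ Finset.range k, G n ≤ h * (200 * x) := by
    rw [hGdef, ← Finset.mul_sum]
    exact mul_le_mul_of_nonneg_left (aux_sum_bound x hx0 hah k) hh.le
  have h5 : a * h ^ 2 ≤ a ^ (2*μ - 1) * h ^ (2*μ) := by
    have hr1 : x ^ (1:ℝ) ≤ x ^ (2*μ - 1) :=
      Real.rpow_le_rpow_of_exponent_ge hx0 hah (by linarith)
    calc a * h ^ 2 = (x ^ (1:ℝ)) * h := by rw [Real.rpow_one, hxdef]; ring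
      _ ≤ (x ^ (2*μ - 1)) * h := mul_le_mul_of_nonneg_right hr1 hh.le
      _ = a ^ (2*μ - 1) * h ^ (2*μ) := by
          rw [hxdef, Real.mul_rpow ha.le hh.le,
            show (2*μ:ℝ) = (2*μ - 1) + 1 by ring, Real.rpow_add hh, Real.rpow_one]
          ring
  have h4 : h * (200 * x) = 200 * (a * h ^ 2) := by rw [hxdef]; ring
  calc (∑ j ∈ Finset.Icc 1 k,
        ∫ s in (((j:ℝ) - 1) * h)..((j:ℝ) * h),
          (Real.exp (-(a * ((k:ℝ) * h - s))) - (1 - a * h) ^ (k - j)) ^ 2)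
      ≤ ∑ j ∈ Finset.Icc 1 k, G (k - j) := h1
    _ = ∑ n ∈ Finset.range k, G n := h2
    _ ≤ h * (200 * x) := h3
    _ = 200 * (a * h ^ 2) := h4
    _ ≤ 200 * (a ^ (2*μ - 1) * h ^ (2*μ)) := by
        exact mul_le_mul_of_nonneg_left h5 (by norm_num)
    _ = 200 * a ^ (2*μ - 1) * h ^ (2*μ) := by ring
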